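/- Let n ≥ 1 be an integer, a < b real numbers, and w : ℝ → ℝ a function such that x ↦ x^k·w(x) is integrable on [a, b] for 0 ≤ k ≤ 2n + 1. Let x₁, …, x_n be distinct points of (a, b), and let w₀, w₁, …, w_n, w_{n+1} and w₁^L, …, w_n^L be real numbers. Assume: (i) for every integer k with 0 ≤ k ≤ 2n + 1, ∫_a^b x^k·w(x) dx = w₀·a^k + Σ_{i=1}^n w_i·x_i^k + w_{n+1}·b^k; and (ii) for every integer k with 0 ≤ k ≤ 2n − 1, ∫_a^b x^k·(x − a)·(b − x)·w(x) dx = Σ_{i=1}^n w_i^L·x_i^k. Then w_i = w_i^L/((x_i − a)·(b − x_i)) for every i = 1, …, n. -/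

import Mathlib

open Set MeasureTheory

lemma sum_integral_aux (a b : ℝ) (ρ : ℝ → ℝ) (m : ℕ) (c : ℕ → ℝ)
    (hI : ∀ k, k < m → IntervalIntegrable (fun t => t ^ k * ρ t) volume a b) :
    ∫ t in a..b, (∑ k ∈ Finset.range m, c k * t ^ k) * ρ t
      = ∑ k ∈ Finset.range m, c k * ∫ t in a..b, t ^ k * ρ t := by
  have h : ∀ t : ℝ, (∑ k ∈ Finset.range m, c k * t ^ k) * ρ t
      = ∑ k ∈ Finset.range m, c k * (t ^ k * ρ t) := by
    intro t; rw [Finset.sum_mul]; simp [mul_assoc]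
  simp_rw [h]
  rw [intervalIntegral.integral_finset_sum
    (fun k hk => (hI k (Finset.mem_range.mp hk)).const_mul (c k))]
  simp_rw [intervalIntegral.integral_const_mul]

theorem stmt_10 (n : ℕ) (hn : 1 ≤ n) (a b : ℝ) (hab : a < b) (ρ : ℝ → ℝ)
    (hint : ∀ k : ℕ, k ≤ 2 * n + 1 → IntegrableOn (fun t => t ^ k * ρ t) (Icc a b))
    (x : Fin n → ℝ) (hx : ∀ i, x i ∈ Ioo a b) (hinj : Function.Injective x)
    (w₀ wn1 : ℝ) (wt wL : Fin n → ℝ)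
    (h1 : ∀ k : ℕ, k ≤ 2 * n + 1 →
      ∫ t in a..b, t ^ k * ρ t = w₀ * a ^ k + (∑ i, wt i * (x i) ^ k) + wn1 * b ^ k)
    (h2 : ∀ k : ℕ, k ≤ 2 * n - 1 →
      ∫ t in a..b, t ^ k * (t - a) * (b - t) * ρ t = ∑ i, wL i * (x i) ^ k) :
    ∀ i, wt i = wL i / ((x i - a) * (b - x i)) := by
  have hI : ∀ k, k ≤ 2 * n + 1 → IntervalIntegrable (fun t => t ^ k * ρ t) volume a b := by
    intro k hk
    apply MeasureTheory.IntegrableOn.intervalIntegrable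
    rw [uIcc_of_le hab.le]
    exact hint k hk
  set ρ' : ℝ → ℝ := fun t => (t - a) * (b - t) * ρ t with hρ'
  have hI' : ∀ k, k < 2 * n → IntervalIntegrable (fun t => t ^ k * ρ' t) volume a b := by
    intro k hk
    have heq : (fun t => t ^ k * ρ' t)
        = fun t => (-1 : ℝ) * (t ^ (k + 2) * ρ t)
          + ((a + b) * (t ^ (k + 1) * ρ t) + (-(a * b)) * (t ^ k * ρ t)) := by
      funext t; simp only [hρ']; ring
    rw [heq]
    exact ((hI (k + 2) (by omega)).const_mul _).add
      (((hI (k + 1) (by omega)).const_mul _).add ((hI k (by omega)).const_mul _))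
  have h2' : ∀ k : ℕ, k < 2 * n →
      ∫ t in a..b, t ^ k * ρ' t = ∑ i, wL i * (x i) ^ k := by
    intro k hk
    have : (fun t : ℝ => t ^ k * ρ' t) = fun t => t ^ k * (t - a) * (b - t) * ρ t := by
      funext t; simp only [hρ']; ring
    rw [this, h2 k (by omega)]
  -- key1 : quadrature for polynomials of degree < 2n+2 w.r.t. ρ
  have key1 : ∀ p : Polynomial ℝ, p.natDegree < 2 * n + 2 →
      ∫ t in a..b, p.eval t * ρ t
        = w₀ * p.eval a + (∑ i, wt i * p.eval (x i)) + wn1 * p.eval b := by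
    intro p hp
    have he : ∀ y : ℝ, p.eval y = ∑ k ∈ Finset.range (2 * n + 2), p.coeff k * y ^ k :=
      fun y => Polynomial.eval_eq_sum_range' hp y
    simp_rw [he]
    rw [sum_integral_aux a b ρ _ _ (fun k hk => hI k (by omega))]
    rw [Finset.sum_congr rfl
      (fun k hk => by rw [h1 k (by have := Finset.mem_range.mp hk; omega)])]
    simp only [mul_add, Finset.sum_add_distrib, Finset.mul_sum]
    congr 1
    · congr 1
      · exact Finset.sum_congr rfl fun k _ => by ring
      · rw [Finset.sum_comm]
        exact Finset.sum_congr rfl fun i _ => Finset.sum_congr rfl fun k _ => by ring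
    · exact Finset.sum_congr rfl fun k _ => by ring
  -- key2 : quadrature for polynomials of degree < 2n w.r.t. ρ'
  have key2 : ∀ q : Polynomial ℝ, q.natDegree < 2 * n →
      ∫ t in a..b, q.eval t * ρ' t = ∑ i, wL i * q.eval (x i) := by
    intro q hq
    have he : ∀ y : ℝ, q.eval y = ∑ k ∈ Finset.range (2 * n), q.coeff k * y ^ k :=
      fun y => Polynomial.eval_eq_sum_range' hq y
    simp_rw [he]
    rw [sum_integral_aux a b ρ' _ _ (fun k hk => hI' k hk)]
    rw [Finset.sum_congr rfl
      (fun k hk => by rw [h2' k (Finset.mem_range.mp hk)])]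
    simp only [Finset.mul_sum]
    rw [Finset.sum_comm]
    exact Finset.sum_congr rfl fun i _ => Finset.sum_congr rfl fun k _ => by ring
  intro i
  have hinjOn : Set.InjOn x (Finset.univ : Finset (Fin n)) := hinj.injOn
  set q : Polynomial ℝ := Lagrange.basis Finset.univ x i with hqdef
  have hqdeg : q.natDegree = n - 1 := by
    rw [hqdef, Lagrange.natDegree_basis hinjOn (Finset.mem_univ i)]
    simp
  have hqi : q.eval (x i) = 1 := Lagrange.eval_basis_self hinjOn (Finset.mem_univ i)
  have hqj : ∀ j, j ≠ i → q.eval (x j) = 0 := fun j hj =>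
    Lagrange.eval_basis_of_ne (Ne.symm hj) (Finset.mem_univ j)
  set p : Polynomial ℝ := (Polynomial.X - Polynomial.C a)
      * ((Polynomial.C b - Polynomial.X) * q) with hpdef
  have hpeval : ∀ y : ℝ, p.eval y = (y - a) * ((b - y) * q.eval y) := by
    intro y; simp [hpdef]
  have hpdeg : p.natDegree < 2 * n + 2 := by
    have h1' := Polynomial.natDegree_mul_le (p := Polynomial.X - Polynomial.C a)
      (q := (Polynomial.C b - Polynomial.X) * q)
    have h2'' := Polynomial.natDegree_mul_le (p := Polynomial.C b - Polynomial.X) (q := q)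
    have h3 : (Polynomial.C b - Polynomial.X).natDegree ≤ 1 := by
      refine le_trans (Polynomial.natDegree_sub_le _ _) ?_
      simp [Polynomial.natDegree_X]
    have h4 : (Polynomial.X - Polynomial.C a).natDegree = 1 := Polynomial.natDegree_X_sub_C a
    rw [hpdef]
    omega
  have hA := key1 p hpdeg
  have hB := key2 q (by omega)
  have hAB : ∫ t in a..b, p.eval t * ρ t = ∫ t in a..b, q.eval t * ρ' t := by
    refine intervalIntegral.integral_congr fun t _ => ?_
    rw [hpeval t]; simp only [hρ']; ring
  rw [hAB, hB] at hA
  rw [hpeval a, hpeval b] at hA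
  simp only [sub_self, zero_mul, mul_zero, add_zero, zero_add] at hA
  have hsum : (∑ j, wt j * p.eval (x j)) = wt i * ((x i - a) * (b - x i)) := by
    rw [Finset.sum_eq_single i]
    · rw [hpeval, hqi]; ring
    · intro j _ hj
      rw [hpeval, hqj j hj]; ring
    · intro h; exact absurd (Finset.mem_univ i) h
  rw [hsum] at hA
  have hBsum : (∑ j, wL j * q.eval (x j)) = wL i := by
    rw [Finset.sum_eq_single i]
    · rw [hqi]; ring
    · intro j _ hj; rw [hqj j hj]; ring
    · intro h; exact absurd (Finset.mem_univ i) h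
  rw [hBsum] at hA
  have h := hx i
  have hne : (x i - a) * (b - x i) ≠ 0 :=
    (mul_pos (sub_pos.mpr h.1) (sub_pos.mpr h.2)).ne'
  field_simp
  exact (eq_div_iff hne).mpr (by linarith [hA])
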